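/- Let W be a finite-dimensional complex vector space, k an integer, and ψ a nondegenerate bilinear form on W satisfying ψ(w, v) = (-1)^k ψ(v, w) for all v, w. Let (F^p)_{p∈ℤ} and (G^p)_{p∈ℤ} be two decreasing filtrations of W by complex subspaces, each equal to W for p sufficiently small and to 0 for p sufficiently large, such that for every p: dim F^p = dim G^p, dim F^p + dim F^{k-p+1} = dim W, and ψ(F^p, F^{k-p+1}) = 0 and ψ(G^p, G^{k-p+1}) = 0. Then there exists a complex-linear automorphism g of W with ψ(g v, g w) = ψ(v, w) for all v, w and g(F^p) = G^p for every p. (Transitivity of the isometry group of ψ on the compact dual Ď of the period domain.) -/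

import Mathlib

open Module Submodule

universe u
variable {W W' : Type u} [AddCommGroup W] [Module ℂ W] [AddCommGroup W'] [Module ℂ W']

section Helpers

lemma stmt9_mono {F : ℤ → Submodule ℂ W} (h : ∀ p, F (p+1) ≤ F p) {p q : ℤ} (hpq : p ≤ q) :
    F q ≤ F p := by
  exact Int.le_induction (motive := fun q _ => F q ≤ F p) le_rfl (fun m _ ih => le_trans (h m) ih) q hpq

lemma stmt9_pair_li (ψ : W →ₗ[ℂ] W →ₗ[ℂ] ℂ) (ε : ℂ) (hε : ε * ε = 1)
    (hsymm : ∀ v w : W, ψ w v = ε * ψ v w)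
    (v u : W) (hvv : ψ v v = 0) (hvu : ψ v u = 1) :
    LinearIndependent ℂ ![v, u] := by
  have hε0 : ε ≠ 0 := fun h => by simp [h] at hε
  have huv : ψ u v = ε := by rw [hsymm, hvu, mul_one]
  rw [LinearIndependent.pair_iff]
  intro s t hst
  have h1 : ψ v (s • v + t • u) = t := by
    rw [map_add, map_smul, map_smul, hvv, hvu, smul_eq_mul, smul_eq_mul]; ring
  have h2 : ψ u (s • v + t • u) = s * ε + t * ψ u u := by
    rw [map_add, map_smul, map_smul, huv, smul_eq_mul, smul_eq_mul]
  rw [hst] at h1 h2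
  simp only [map_zero] at h1 h2
  have ht : t = 0 := h1.symm
  subst ht
  simp only [zero_mul, add_zero] at h2
  rcases mul_eq_zero.mp h2.symm with h | h
  · exact ⟨h, rfl⟩
  · exact absurd h hε0

/-- decomposition of a subspace containing `v` and contained in `v^⊥`. -/
lemma stmt9_decomp (ψ : W →ₗ[ℂ] W →ₗ[ℂ] ℂ) (ε : ℂ) (hε : ε * ε = 1)
    (hsymm : ∀ v w : W, ψ w v = ε * ψ v w)
    (v u : W) (hvv : ψ v v = 0) (hvu : ψ v u = 1)
    (X : Submodule ℂ W) (hvX : v ∈ X) (hXv : ∀ x ∈ X, ψ v x = 0) :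
    X = span ℂ {v} ⊔ (X ⊓ (LinearMap.ker (ψ v) ⊓ LinearMap.ker (ψ u))) := by
  have huv : ψ u v = ε := by rw [hsymm, hvu, mul_one]
  apply le_antisymm
  · intro x hx
    set c := ε * ψ u x with hc
    have hmem : x - c • v ∈ X ⊓ (LinearMap.ker (ψ v) ⊓ LinearMap.ker (ψ u)) := by
      refine Submodule.mem_inf.mpr ⟨X.sub_mem hx (X.smul_mem c hvX), Submodule.mem_inf.mpr ⟨?_, ?_⟩⟩
      · rw [LinearMap.mem_ker, map_sub, map_smul]
        rw [hXv x hx, hvv]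
        simp
      · rw [LinearMap.mem_ker, map_sub, map_smul]
        rw [huv, hc]
        simp only [smul_eq_mul]
        linear_combination (-((ψ u) x)) * hε
    rw [Submodule.mem_sup]
    exact ⟨c • v, Submodule.smul_mem _ c (Submodule.mem_span_singleton_self v), _, hmem,
      by abel⟩
  · refine sup_le ?_ inf_le_left
    rw [Submodule.span_le, Set.singleton_subset_iff]
    exact hvX
    
lemma stmt9_decomp_rank (ψ : W →ₗ[ℂ] W →ₗ[ℂ] ℂ) (ε : ℂ) (hε : ε * ε = 1)
    [FiniteDimensional ℂ W]
    (hsymm : ∀ v w : W, ψ w v = ε * ψ v w)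
    (v u : W) (hvv : ψ v v = 0) (hvu : ψ v u = 1)
    (X : Submodule ℂ W) (hvX : v ∈ X) (hXv : ∀ x ∈ X, ψ v x = 0) :
    finrank ℂ X = finrank ℂ ↥(X ⊓ (LinearMap.ker (ψ v) ⊓ LinearMap.ker (ψ u))) + 1 := by
  have hε0 : ε ≠ 0 := fun h => by simp [h] at hε
  have huv : ψ u v = ε := by rw [hsymm, hvu, mul_one]
  have hv0 : v ≠ 0 := by
    rintro rfl; simp at hvu
  have hdisj : span ℂ {v} ⊓ (X ⊓ (LinearMap.ker (ψ v) ⊓ LinearMap.ker (ψ u))) = ⊥ := by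
    rw [eq_bot_iff]
    rintro x hx
    rw [Submodule.mem_inf] at hx
    obtain ⟨hx1, hx2⟩ := hx
    rw [Submodule.mem_inf] at hx2
    obtain ⟨-, hx2⟩ := hx2
    rw [Submodule.mem_inf] at hx2
    obtain ⟨-, hx3⟩ := hx2
    obtain ⟨s, rfl⟩ := Submodule.mem_span_singleton.mp hx1
    have : ψ u (s • v) = s * ε := by rw [map_smul, huv, smul_eq_mul]
    rw [LinearMap.mem_ker] at hx3
    rw [hx3] at this
    rcases (mul_eq_zero.mp this.symm) with h | h
    · simp [h]
    · exact absurd h hε0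
  have h1 := Submodule.finrank_sup_add_finrank_inf_eq (span ℂ {v})
    (X ⊓ (LinearMap.ker (ψ v) ⊓ LinearMap.ker (ψ u)))
  rw [hdisj, finrank_span_singleton hv0] at h1
  have h2 : finrank ℂ ↥X =
      finrank ℂ ↥(span ℂ {v} ⊔ X ⊓ (LinearMap.ker (ψ v) ⊓ LinearMap.ker (ψ u))) := by
    rw [← stmt9_decomp ψ ε hε hsymm v u hvv hvu X hvX hXv]
  rw [h2]
  simp at h1
  omega

end Helpers

lemma split_plane [FiniteDimensional ℂ W] (ψ : W →ₗ[ℂ] W →ₗ[ℂ] ℂ) (ε : ℂ) (hε : ε * ε = 1)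
    (hsymm : ∀ v w : W, ψ w v = ε * ψ v w)
    (hnd : ∀ v : W, (∀ w : W, ψ v w = 0) → v = 0)
    (v u : W) (hvv : ψ v v = 0) (huu : ψ u u = 0) (hvu : ψ v u = 1) :
    IsCompl (span ℂ {v, u}) (LinearMap.ker (ψ v) ⊓ LinearMap.ker (ψ u)) ∧
    (∀ x ∈ span ℂ {v, u}, ∀ y ∈ LinearMap.ker (ψ v) ⊓ LinearMap.ker (ψ u), ψ x y = 0) ∧
    (∀ x ∈ LinearMap.ker (ψ v) ⊓ LinearMap.ker (ψ u), ∀ y ∈ span ℂ {v, u}, ψ x y = 0) ∧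
    finrank ℂ ↥(LinearMap.ker (ψ v) ⊓ LinearMap.ker (ψ u)) + 2 = finrank ℂ W ∧
    (∀ x : ↥(LinearMap.ker (ψ v) ⊓ LinearMap.ker (ψ u)),
      (∀ y : ↥(LinearMap.ker (ψ v) ⊓ LinearMap.ker (ψ u)), ψ x y = 0) → x = 0) := by
  have hε0 : ε ≠ 0 := fun h => by simp [h] at hε
  have huv : ψ u v = ε := by rw [hsymm, hvu, mul_one]
  set P := span ℂ {v, u} with hP
  set H := LinearMap.ker (ψ v) ⊓ LinearMap.ker (ψ u) with hH
  have hmemH : ∀ y, y ∈ H ↔ ψ v y = 0 ∧ ψ u y = 0 := by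
    intro y; simp [hH, LinearMap.mem_ker]
  have hPH : ∀ x ∈ P, ∀ y ∈ H, ψ x y = 0 := by
    intro x hx y hy
    obtain ⟨s, t, rfl⟩ := Submodule.mem_span_pair.mp hx
    obtain ⟨h1, h2⟩ := (hmemH y).mp hy
    simp [h1, h2]
  have hHP : ∀ x ∈ H, ∀ y ∈ P, ψ x y = 0 := by
    intro x hx y hy
    rw [hsymm, hPH y hy x hx, mul_zero]
  -- linear independence
  have hli : LinearIndependent ℂ ![v, u] := by
    rw [LinearIndependent.pair_iff]
    intro s t hst
    have h1 : ψ v (s • v + t • u) = t := by simp [hvv, hvu]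
    have h2 : ψ u (s • v + t • u) = s * ε := by simp [huu, huv]
    rw [hst] at h1 h2
    simp only [map_zero] at h1 h2
    exact ⟨by rcases mul_eq_zero.mp h2.symm with h | h; exact h; exact absurd h hε0, h1.symm⟩
  have hrange : Set.range ![v, u] = {v, u} := by
    ext x; simp [Fin.exists_fin_two]; tauto
  have hdimP : finrank ℂ P = 2 := by
    rw [hP, ← hrange, finrank_span_eq_card hli]; simp
  -- disjointness
  have hdisj : P ⊓ H = ⊥ := by
    rw [eq_bot_iff]
    rintro x ⟨hxP, hxH⟩
    obtain ⟨s, t, rfl⟩ := Submodule.mem_span_pair.mp hxP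
    obtain ⟨h1, h2⟩ := (hmemH _).mp hxH
    simp [hvv, hvu, huu, huv] at h1 h2
    rcases h2 with h | h
    · subst h; simp [h1]
    · exact absurd h hε0
  -- dimension of H
  have hker : H = LinearMap.ker ((ψ v).prod (ψ u)) := by rw [LinearMap.ker_prod]
  have hdimH : finrank ℂ W ≤ finrank ℂ H + 2 := by
    have := LinearMap.finrank_range_add_finrank_ker ((ψ v).prod (ψ u))
    have h2 : finrank ℂ (LinearMap.range ((ψ v).prod (ψ u))) ≤ 2 := by
      have := Submodule.finrank_le (LinearMap.range ((ψ v).prod (ψ u)))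
      simpa using this
    rw [hker]; omega
  have hsum : finrank ℂ P + finrank ℂ H ≤ finrank ℂ W := by
    have h1 := Submodule.finrank_sup_add_finrank_inf_eq P H
    rw [hdisj] at h1
    have h2 := Submodule.finrank_le (P ⊔ H)
    simp at h1; omega
  have hdimH2 : finrank ℂ H + 2 = finrank ℂ W := by omega
  have hsup : P ⊔ H = ⊤ := by
    apply Submodule.eq_top_of_finrank_eq
    have h1 := Submodule.finrank_sup_add_finrank_inf_eq P H
    rw [hdisj] at h1; simp at h1; omega
  have hcompl : IsCompl P H := ⟨disjoint_iff.mpr hdisj, codisjoint_iff.mpr hsup⟩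
  refine ⟨hcompl, hPH, hHP, hdimH2, ?_⟩
  intro x hx
  have : ∀ w : W, ψ x w = 0 := by
    intro w
    obtain ⟨p, hp, h, hh, rfl⟩ := Submodule.mem_sup.mp (hsup ▸ Submodule.mem_top (x := w))
    rw [map_add, hHP x x.2 p hp, hx ⟨h, hh⟩, zero_add]
  exact Subtype.ext (hnd x this)

lemma split_line [FiniteDimensional ℂ W] (ψ : W →ₗ[ℂ] W →ₗ[ℂ] ℂ) (ε : ℂ)
    (hsymm : ∀ v w : W, ψ w v = ε * ψ v w)
    (hnd : ∀ v : W, (∀ w : W, ψ v w = 0) → v = 0)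
    (v : W) (hvv : ψ v v = 1) :
    IsCompl (span ℂ {v}) (LinearMap.ker (ψ v)) ∧
    (∀ x ∈ span ℂ {v}, ∀ y ∈ LinearMap.ker (ψ v), ψ x y = 0) ∧
    (∀ x ∈ LinearMap.ker (ψ v), ∀ y ∈ span ℂ {v}, ψ x y = 0) ∧
    finrank ℂ ↥(LinearMap.ker (ψ v)) + 1 = finrank ℂ W ∧
    (∀ x : LinearMap.ker (ψ v), (∀ y : LinearMap.ker (ψ v), ψ x y = 0) → x = 0) := by
  set P := span ℂ {v} with hP
  set H := LinearMap.ker (ψ v) with hH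
  have hPH : ∀ x ∈ P, ∀ y ∈ H, ψ x y = 0 := by
    intro x hx y hy
    obtain ⟨s, rfl⟩ := Submodule.mem_span_singleton.mp hx
    have : ψ v y = 0 := hy
    simp [this]
  have hHP : ∀ x ∈ H, ∀ y ∈ P, ψ x y = 0 := by
    intro x hx y hy; rw [hsymm, hPH y hy x hx, mul_zero]
  have hv0 : v ≠ 0 := by rintro rfl; simp at hvv
  have hdimP : finrank ℂ P = 1 := finrank_span_singleton hv0
  have hdisj : P ⊓ H = ⊥ := by
    rw [eq_bot_iff]
    rintro x ⟨hxP, hxH⟩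
    obtain ⟨s, rfl⟩ := Submodule.mem_span_singleton.mp hxP
    have h1 : ψ v (s • v) = 0 := hxH
    simp [hvv] at h1
    simp [h1]
  have hdimH : finrank ℂ W ≤ finrank ℂ H + 1 := by
    have h0 := LinearMap.finrank_range_add_finrank_ker (ψ v)
    rw [← hH] at h0
    have h2 : finrank ℂ (LinearMap.range (ψ v)) ≤ 1 := by
      have := Submodule.finrank_le (LinearMap.range (ψ v))
      simpa using this
    omega
  have hsum : finrank ℂ P + finrank ℂ H ≤ finrank ℂ W := by
    have h1 := Submodule.finrank_sup_add_finrank_inf_eq P H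
    rw [hdisj] at h1
    have h2 := Submodule.finrank_le (P ⊔ H)
    simp at h1; omega
  have hdimH2 : finrank ℂ H + 1 = finrank ℂ W := by omega
  have hsup : P ⊔ H = ⊤ := by
    apply Submodule.eq_top_of_finrank_eq
    have h1 := Submodule.finrank_sup_add_finrank_inf_eq P H
    rw [hdisj] at h1; simp at h1; omega
  have hcompl : IsCompl P H := ⟨disjoint_iff.mpr hdisj, codisjoint_iff.mpr hsup⟩
  refine ⟨hcompl, hPH, hHP, hdimH2, ?_⟩
  intro x hx
  have : ∀ w : W, ψ x w = 0 := by
    intro w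
    obtain ⟨p, hp, h, hh, rfl⟩ := Submodule.mem_sup.mp (hsup ▸ Submodule.mem_top (x := w))
    rw [map_add, hHP x x.2 p hp, hx ⟨h, hh⟩, zero_add]
  exact Subtype.ext (hnd x this)

lemma plane_equiv (ψ : W →ₗ[ℂ] W →ₗ[ℂ] ℂ) (ψ' : W' →ₗ[ℂ] W' →ₗ[ℂ] ℂ) (ε : ℂ)
    (hsymm : ∀ v w : W, ψ w v = ε * ψ v w) (hsymm' : ∀ v w : W', ψ' w v = ε * ψ' v w)
    (v u : W) (v' u' : W')
    (hli : LinearIndependent ℂ ![v, u]) (hli' : LinearIndependent ℂ ![v', u'])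
    (hvv : ψ v v = 0) (huu : ψ u u = 0) (hvu : ψ v u = 1)
    (hvv' : ψ' v' v' = 0) (huu' : ψ' u' u' = 0) (hvu' : ψ' v' u' = 1) :
    ∃ e₁ : (span ℂ {v, u} : Submodule ℂ W) ≃ₗ[ℂ] (span ℂ {v', u'} : Submodule ℂ W'),
      (∀ x y : span ℂ {v, u}, ψ' (e₁ x) (e₁ y) = ψ x y) ∧
      (∀ x : span ℂ {v, u}, (x : W) = v → ((e₁ x : W') = v')) ∧
      (∀ x : span ℂ {v, u}, (x : W) = u → ((e₁ x : W') = u')) := by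
  have hrange : Set.range ![v, u] = {v, u} := by
    ext x; simp [Fin.exists_fin_two]; tauto
  have hrange' : Set.range ![v', u'] = {v', u'} := by
    ext x; simp [Fin.exists_fin_two]; tauto
  let b : Basis (Fin 2) ℂ (span ℂ {v, u} : Submodule ℂ W) :=
    (Basis.span hli).map (LinearEquiv.ofEq _ _ (by rw [hrange]))
  let b' : Basis (Fin 2) ℂ (span ℂ {v', u'} : Submodule ℂ W') :=
    (Basis.span hli').map (LinearEquiv.ofEq _ _ (by rw [hrange']))
  have hb : ∀ i, (b i : W) = ![v, u] i := by
    intro i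
    simp only [b, Basis.map_apply, LinearEquiv.coe_ofEq_apply, Basis.span_apply]
  have hb' : ∀ i, (b' i : W') = ![v', u'] i := by
    intro i
    simp only [b', Basis.map_apply, LinearEquiv.coe_ofEq_apply, Basis.span_apply]
  let e₁ := b.equiv b' (Equiv.refl _)
  have he : ∀ i, e₁ (b i) = b' i := fun i => b.equiv_apply i b' (Equiv.refl _)
  have huv : ψ u v = ε := by rw [hsymm, hvu, mul_one]
  have huv' : ψ' u' v' = ε := by rw [hsymm', hvu', mul_one]
  -- bilinear forms on the span agree
  have hiso : ∀ x y : span ℂ {v, u}, ψ' (e₁ x) (e₁ y) = ψ x y := by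
    have heq : (ψ'.compl₁₂ ((span ℂ {v', u'}).subtype ∘ₗ e₁.toLinearMap)
          ((span ℂ {v', u'}).subtype ∘ₗ e₁.toLinearMap) :
            (span ℂ {v,u} : Submodule ℂ W) →ₗ[ℂ] _ →ₗ[ℂ] ℂ)
        = ψ.compl₁₂ (span ℂ {v, u}).subtype (span ℂ {v, u}).subtype := by
      apply LinearMap.ext_basis b b
      intro i j
      have hval : ∀ i, ((span ℂ {v', u'}).subtype ∘ₗ e₁.toLinearMap) (b i) = ![v', u'] i := by
        intro i
        simp only [LinearMap.comp_apply, Submodule.subtype_apply, LinearEquiv.coe_coe]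
        rw [he, hb']
      simp only [LinearMap.compl₁₂_apply]
      rw [hval, hval]
      simp only [Submodule.subtype_apply]
      rw [hb, hb]
      fin_cases i <;> fin_cases j <;>
        simp [hvv, huu, hvu, huv, hvv', huu', hvu', huv']
    intro x y
    have h2 := LinearMap.congr_fun (LinearMap.congr_fun heq x) y
    simpa [LinearMap.compl₁₂_apply] using h2
  refine ⟨e₁, hiso, ?_, ?_⟩
  · intro x hx
    have : x = b 0 := Subtype.ext (by rw [hx, hb 0]; rfl)
    rw [this, he 0, hb' 0]; rfl
  · intro x hx
    have : x = b 1 := Subtype.ext (by rw [hx, hb 1]; rfl)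
    rw [this, he 1, hb' 1]; rfl

lemma line_equiv (ψ : W →ₗ[ℂ] W →ₗ[ℂ] ℂ) (ψ' : W' →ₗ[ℂ] W' →ₗ[ℂ] ℂ)
    (v : W) (v' : W') (hv : v ≠ 0) (hv' : v' ≠ 0)
    (hvv : ψ v v = 1) (hvv' : ψ' v' v' = 1) :
    ∃ e₁ : (span ℂ {v} : Submodule ℂ W) ≃ₗ[ℂ] (span ℂ {v'} : Submodule ℂ W'),
      ∀ x y : span ℂ {v}, ψ' (e₁ x) (e₁ y) = ψ x y := by
  let e₁ := (LinearEquiv.toSpanNonzeroSingleton ℂ W v hv).symm ≪≫ₗ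
    LinearEquiv.toSpanNonzeroSingleton ℂ W' v' hv'
  have key : ∀ (s : ℂ) (h : s • v ∈ span ℂ {v}), (e₁ ⟨s • v, h⟩ : W') = s • v' := by
    intro s h
    have h1 : (⟨s • v, h⟩ : span ℂ {v}) = LinearEquiv.toSpanNonzeroSingleton ℂ W v hv s := by
      rw [LinearEquiv.toSpanNonzeroSingleton_apply]
    rw [h1]
    show ((LinearEquiv.toSpanNonzeroSingleton ℂ W' v' hv')
      ((LinearEquiv.toSpanNonzeroSingleton ℂ W v hv).symm
        ((LinearEquiv.toSpanNonzeroSingleton ℂ W v hv) s)) : W') = s • v'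
    rw [LinearEquiv.symm_apply_apply, LinearEquiv.toSpanNonzeroSingleton_apply]
  refine ⟨e₁, ?_⟩
  intro x y
  obtain ⟨s, hs⟩ := Submodule.mem_span_singleton.mp x.2
  obtain ⟨t, ht⟩ := Submodule.mem_span_singleton.mp y.2
  have hx : x = ⟨s • v, by rw [hs]; exact x.2⟩ := Subtype.ext (by simp [hs])
  have hy : y = ⟨t • v, by rw [ht]; exact y.2⟩ := Subtype.ext (by simp [ht])
  rw [hx, hy, key, key]
  simp [hvv, hvv', mul_comm]

lemma glue_aux (ψ : W →ₗ[ℂ] W →ₗ[ℂ] ℂ) (ψ' : W' →ₗ[ℂ] W' →ₗ[ℂ] ℂ)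
    (P H : Submodule ℂ W) (hc : IsCompl P H)
    (P' H' : Submodule ℂ W') (hc' : IsCompl P' H')
    (hPH : ∀ x ∈ P, ∀ y ∈ H, ψ x y = 0) (hHP : ∀ x ∈ H, ∀ y ∈ P, ψ x y = 0)
    (hPH' : ∀ x ∈ P', ∀ y ∈ H', ψ' x y = 0) (hHP' : ∀ x ∈ H', ∀ y ∈ P', ψ' x y = 0)
    (e₁ : P ≃ₗ[ℂ] P') (he₁ : ∀ x y : P, ψ' (e₁ x) (e₁ y) = ψ x y)
    (e₂ : H ≃ₗ[ℂ] H') (he₂ : ∀ x y : H, ψ' (e₂ x) (e₂ y) = ψ x y) :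
    ∃ e : W ≃ₗ[ℂ] W', (∀ v w : W, ψ' (e v) (e w) = ψ v w) ∧
      (∀ x : P, e x = e₁ x) ∧ (∀ x : H, e x = e₂ x) := by
  refine ⟨(Submodule.prodEquivOfIsCompl P H hc).symm ≪≫ₗ (e₁.prodCongr e₂) ≪≫ₗ
    (Submodule.prodEquivOfIsCompl P' H' hc'), ?_, ?_, ?_⟩
  · have key : ∀ (p : P) (h : H),
        ((Submodule.prodEquivOfIsCompl P H hc).symm ≪≫ₗ (e₁.prodCongr e₂) ≪≫ₗ
          (Submodule.prodEquivOfIsCompl P' H' hc')) ((p : W) + (h : W))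
          = ((e₁ p : W') + (e₂ h : W')) := by
      intro p h
      have h1 : (Submodule.prodEquivOfIsCompl P H hc) (p, h) = (p : W) + (h : W) :=
        Submodule.coe_prodEquivOfIsCompl' P H hc (p, h)
      have h2 : (Submodule.prodEquivOfIsCompl P H hc).symm ((p : W) + (h : W)) = (p, h) := by
        rw [← h1]; exact (Submodule.prodEquivOfIsCompl P H hc).symm_apply_apply _
      simp [h2, Submodule.coe_prodEquivOfIsCompl']
    intro v w
    obtain ⟨pv, hpv, hv, hhv, hveq⟩ := Submodule.mem_sup.mp (hc.sup_eq_top ▸ Submodule.mem_top (x := v))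
    obtain ⟨pw, hpw, hw, hhw, hweq⟩ := Submodule.mem_sup.mp (hc.sup_eq_top ▸ Submodule.mem_top (x := w))
    subst hveq hweq
    rw [key ⟨pv, hpv⟩ ⟨hv, hhv⟩, key ⟨pw, hpw⟩ ⟨hw, hhw⟩]
    simp only [map_add, LinearMap.add_apply]
    rw [he₁, he₂, hPH' _ (e₁ _).2 _ (e₂ _).2, hHP' _ (e₂ _).2 _ (e₁ _).2,
      hPH _ hpv _ hhw, hHP _ hhv _ hpw]
  · intro x
    have h2 : (Submodule.prodEquivOfIsCompl P H hc).symm (x : W) = (x, 0) := by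
      rw [show (x:W) = (Submodule.prodEquivOfIsCompl P H hc) (x, 0) by
        simp [Submodule.coe_prodEquivOfIsCompl']]
      exact (Submodule.prodEquivOfIsCompl P H hc).symm_apply_apply _
    simp [h2, Submodule.coe_prodEquivOfIsCompl']
  · intro x
    have h2 : (Submodule.prodEquivOfIsCompl P H hc).symm (x : W) = (0, x) := by
      rw [show (x:W) = (Submodule.prodEquivOfIsCompl P H hc) (0, x) by
        simp [Submodule.coe_prodEquivOfIsCompl']]
      exact (Submodule.prodEquivOfIsCompl P H hc).symm_apply_apply _
    simp [h2, Submodule.coe_prodEquivOfIsCompl']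

theorem stmt9_classify (n : ℕ) : ∀ {W W' : Type u} [AddCommGroup W] [Module ℂ W]
    [FiniteDimensional ℂ W] [AddCommGroup W'] [Module ℂ W'] [FiniteDimensional ℂ W']
    (ε : ℂ) (ψ : W →ₗ[ℂ] W →ₗ[ℂ] ℂ) (ψ' : W' →ₗ[ℂ] W' →ₗ[ℂ] ℂ),
    ε * ε = 1 →
    (∀ v : W, (∀ w : W, ψ v w = 0) → v = 0) →
    (∀ v : W', (∀ w : W', ψ' v w = 0) → v = 0) →
    (∀ v w : W, ψ w v = ε * ψ v w) →
    (∀ v w : W', ψ' w v = ε * ψ' v w) →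
    finrank ℂ W = n → finrank ℂ W' = n →
    ∃ e : W ≃ₗ[ℂ] W', ∀ v w : W, ψ' (e v) (e w) = ψ v w := by
  induction n using Nat.strong_induction_on with
  | _ n IH =>
  intro W W' _ _ _ _ _ _ ε ψ ψ' hε hnd hnd' hsymm hsymm' hrW hrW'
  rcases Nat.eq_zero_or_pos n with h0 | hpos
  · subst h0
    have hss : Subsingleton W := finrank_zero_iff.mp hrW
    have hss' : Subsingleton W' := finrank_zero_iff.mp hrW'
    refine ⟨LinearEquiv.ofFinrankEq W W' (by rw [hrW, hrW']), fun v w => ?_⟩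
    rw [Subsingleton.elim v 0, Subsingleton.elim w 0]
    simp
  have hW : Nontrivial W := Module.finrank_pos_iff.mp (by rw [hrW]; exact hpos)
  have hW' : Nontrivial W' := Module.finrank_pos_iff.mp (by rw [hrW']; exact hpos)
  rcases mul_self_eq_one_iff.mp hε with hε1 | hε1
  · -- symmetric case ε = 1
    have hexists : ∀ (V : Type u) [AddCommGroup V] [Module ℂ V], ∀ (φ : V →ₗ[ℂ] V →ₗ[ℂ] ℂ),
        (∀ x : V, (∀ y : V, φ x y = 0) → x = 0) → (∀ x y : V, φ y x = ε * φ x y) →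
        Nontrivial V → ∃ v : V, φ v v ≠ 0 := by
      intro V _ _ φ hφnd hφsymm hVnt
      by_contra h
      push_neg at h
      have hall : ∀ x y : V, φ x y = 0 := by
        intro x y
        have h0 : φ (x + y) (x + y) = 0 := h _
        simp only [map_add, LinearMap.add_apply] at h0
        rw [h x, h y] at h0
        have h2 : φ y x = ε * φ x y := hφsymm x y
        rw [hε1, one_mul] at h2
        have h3 : (2 : ℂ) * φ x y = 0 := by linear_combination h0 - h2
        exact (mul_eq_zero.mp h3).resolve_left two_ne_zero
      obtain ⟨x, hx⟩ := exists_ne (0 : V)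
      exact hx (hφnd x (hall x))
    obtain ⟨v₀, hv₀⟩ := hexists W ψ hnd hsymm hW
    obtain ⟨v₀', hv₀'⟩ := hexists W' ψ' hnd' hsymm' hW'
    obtain ⟨z, hz⟩ := IsAlgClosed.exists_pow_nat_eq (ψ v₀ v₀) (n := 2) (by norm_num)
    have hz0 : z ≠ 0 := by rintro rfl; rw [← hz] at hv₀; simp at hv₀
    obtain ⟨z', hz'⟩ := IsAlgClosed.exists_pow_nat_eq (ψ' v₀' v₀') (n := 2) (by norm_num)
    have hz0' : z' ≠ 0 := by rintro rfl; rw [← hz'] at hv₀'; simp at hv₀'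
    set v := z⁻¹ • v₀ with hvdef
    set v' := z'⁻¹ • v₀' with hvdef'
    have hvv : ψ v v = 1 := by
      rw [hvdef, map_smul, map_smul, LinearMap.smul_apply, smul_eq_mul, smul_eq_mul, ← hz]
      field_simp
      try ring
    have hvv' : ψ' v' v' = 1 := by
      rw [hvdef', map_smul, map_smul, LinearMap.smul_apply, smul_eq_mul, smul_eq_mul, ← hz']
      field_simp
      try ring
    obtain ⟨hcompl, hPH, hHP, hdimH, hndH⟩ := split_line ψ ε hsymm hnd v hvv
    obtain ⟨hcompl', hPH', hHP', hdimH', hndH'⟩ := split_line ψ' ε hsymm' hnd' v' hvv'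
    have hv0 : v ≠ 0 := by intro h; rw [h] at hvv; simp at hvv
    have hv0' : v' ≠ 0 := by intro h; rw [h] at hvv'; simp at hvv'
    set H : Submodule ℂ W := LinearMap.ker (ψ v)
    set H' : Submodule ℂ W' := LinearMap.ker (ψ' v')
    set ψH := ψ.compl₁₂ H.subtype H.subtype with hψH
    set ψH' := ψ'.compl₁₂ H'.subtype H'.subtype with hψH'
    have hm : finrank ℂ H + 1 = n := by rw [hdimH, hrW]
    have hm' : finrank ℂ H' = finrank ℂ H := by omega
    obtain ⟨e₂, he₂⟩ := IH (finrank ℂ H) (by omega) ε ψH ψH' hε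
      (by intro x hx; exact hndH x (fun y => by
            have := hx y; rwa [hψH, LinearMap.compl₁₂_apply] at this))
      (by intro x hx; exact hndH' x (fun y => by
            have := hx y; rwa [hψH', LinearMap.compl₁₂_apply] at this))
      (by intro x y; simp only [hψH, LinearMap.compl₁₂_apply]; exact hsymm _ _)
      (by intro x y; simp only [hψH', LinearMap.compl₁₂_apply]; exact hsymm' _ _)
      rfl hm'
    obtain ⟨e₁, he₁⟩ := line_equiv ψ ψ' v v' hv0 hv0' hvv hvv'
    obtain ⟨e, he, -, -⟩ := glue_aux ψ ψ' (span ℂ {v}) H hcompl (span ℂ {v'}) H' hcompl'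
      hPH hHP hPH' hHP' e₁ he₁ e₂
      (fun x y => by have := he₂ x y; rwa [hψH, hψH', LinearMap.compl₁₂_apply,
        LinearMap.compl₁₂_apply] at this)
    exact ⟨e, he⟩
  · -- alternating case ε = -1
    have hiso : ∀ x : W, ψ x x = 0 := by
      intro x
      have h := hsymm x x
      rw [hε1, neg_one_mul] at h
      have h2 : (2:ℂ) * ψ x x = 0 := by linear_combination h
      exact (mul_eq_zero.mp h2).resolve_left two_ne_zero
    have hiso' : ∀ x : W', ψ' x x = 0 := by
      intro x
      have h := hsymm' x x
      rw [hε1, neg_one_mul] at h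
      have h2 : (2:ℂ) * ψ' x x = 0 := by linear_combination h
      exact (mul_eq_zero.mp h2).resolve_left two_ne_zero
    obtain ⟨v, hv0⟩ := exists_ne (0 : W)
    obtain ⟨v', hv0'⟩ := exists_ne (0 : W')
    have hex : ∃ w, ψ v w ≠ 0 := by
      by_contra h; push_neg at h; exact hv0 (hnd v h)
    obtain ⟨u₀, hu₀⟩ := hex
    have hex' : ∃ w, ψ' v' w ≠ 0 := by
      by_contra h; push_neg at h; exact hv0' (hnd' v' h)
    obtain ⟨u₀', hu₀'⟩ := hex'
    set u := (ψ v u₀)⁻¹ • u₀ with hudef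
    set u' := (ψ' v' u₀')⁻¹ • u₀' with hudef'
    have hvu : ψ v u = 1 := by rw [hudef, map_smul, smul_eq_mul, inv_mul_cancel₀ hu₀]
    have hvu' : ψ' v' u' = 1 := by rw [hudef', map_smul, smul_eq_mul, inv_mul_cancel₀ hu₀']
    obtain ⟨hcompl, hPH, hHP, hdimH, hndH⟩ :=
      split_plane ψ ε hε hsymm hnd v u (hiso v) (hiso u) hvu
    obtain ⟨hcompl', hPH', hHP', hdimH', hndH'⟩ :=
      split_plane ψ' ε hε hsymm' hnd' v' u' (hiso' v') (hiso' u') hvu'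
    set H : Submodule ℂ W := LinearMap.ker (ψ v) ⊓ LinearMap.ker (ψ u) with hHdef
    set H' : Submodule ℂ W' := LinearMap.ker (ψ' v') ⊓ LinearMap.ker (ψ' u') with hHdef'
    set ψH := ψ.compl₁₂ H.subtype H.subtype with hψH
    set ψH' := ψ'.compl₁₂ H'.subtype H'.subtype with hψH'
    have hm : finrank ℂ H + 2 = n := by rw [hdimH, hrW]
    have hm' : finrank ℂ H' = finrank ℂ H := by omega
    obtain ⟨e₂, he₂⟩ := IH (finrank ℂ H) (by omega) ε ψH ψH' hε
      (by intro x hx; exact hndH x (fun y => by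
            have := hx y; rwa [hψH, LinearMap.compl₁₂_apply] at this))
      (by intro x hx; exact hndH' x (fun y => by
            have := hx y; rwa [hψH', LinearMap.compl₁₂_apply] at this))
      (by intro x y; simp only [hψH, LinearMap.compl₁₂_apply]; exact hsymm _ _)
      (by intro x y; simp only [hψH', LinearMap.compl₁₂_apply]; exact hsymm' _ _)
      rfl hm'
    obtain ⟨e₁, he₁, -, -⟩ := plane_equiv ψ ψ' ε hsymm hsymm' v u v' u'
      (stmt9_pair_li ψ ε hε hsymm v u (hiso v) hvu)
      (stmt9_pair_li ψ' ε hε hsymm' v' u' (hiso' v') hvu')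
      (hiso v) (hiso u) hvu (hiso' v') (hiso' u') hvu'
    obtain ⟨e, he, -, -⟩ := glue_aux ψ ψ' (span ℂ {v, u}) H hcompl (span ℂ {v', u'}) H' hcompl'
      hPH hHP hPH' hHP' e₁ he₁ e₂
      (fun x y => by have := he₂ x y; rwa [hψH, hψH', LinearMap.compl₁₂_apply,
        LinearMap.compl₁₂_apply] at this)
    exact ⟨e, he⟩
theorem stmt9_key (n : ℕ) : ∀ {W W' : Type u} [AddCommGroup W] [Module ℂ W]
    [FiniteDimensional ℂ W] [AddCommGroup W'] [Module ℂ W'] [FiniteDimensional ℂ W']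
    (k : ℤ) (ψ : W →ₗ[ℂ] W →ₗ[ℂ] ℂ) (ψ' : W' →ₗ[ℂ] W' →ₗ[ℂ] ℂ)
    (F : ℤ → Submodule ℂ W) (G : ℤ → Submodule ℂ W'),
    (∀ v : W, (∀ w : W, ψ v w = 0) → v = 0) →
    (∀ v : W', (∀ w : W', ψ' v w = 0) → v = 0) →
    (∀ v w : W, ψ w v = (-1 : ℂ) ^ k * ψ v w) →
    (∀ v w : W', ψ' w v = (-1 : ℂ) ^ k * ψ' v w) →
    (∀ p : ℤ, F (p + 1) ≤ F p) → (∀ p : ℤ, G (p + 1) ≤ G p) →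
    (∃ a : ℤ, ∀ p ≤ a, F p = ⊤) → (∃ b : ℤ, ∀ p ≥ b, F p = ⊥) →
    (∀ p : ℤ, finrank ℂ (F p) = finrank ℂ (G p)) →
    (∀ p : ℤ, finrank ℂ (F p) + finrank ℂ (F (k - p + 1)) = n) →
    (∀ p : ℤ, ∀ v ∈ F p, ∀ w ∈ F (k - p + 1), ψ v w = 0) →
    (∀ p : ℤ, ∀ v ∈ G p, ∀ w ∈ G (k - p + 1), ψ' v w = 0) →
    finrank ℂ W = n → finrank ℂ W' = n →
    ∃ e : W ≃ₗ[ℂ] W', (∀ v w : W, ψ' (e v) (e w) = ψ v w) ∧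
      ∀ p : ℤ, (F p).map (e : W →ₗ[ℂ] W') = G p := by
  induction n using Nat.strong_induction_on with
  | _ n IH =>
  intro W W' _ _ _ _ _ _ k ψ ψ' F G hnd hnd' hsymm hsymm' hFdec hGdec hFtop hFbot
    hdim hdim' hFiso hGiso hrW hrW'
  have hε : (-1 : ℂ) ^ k * (-1 : ℂ) ^ k = 1 := by
    rcases Int.even_or_odd k with hk | hk
    · rw [hk.neg_one_zpow]; norm_num
    · rw [hk.neg_one_zpow]; norm_num
  set ε := (-1 : ℂ) ^ k with hεdef
  have hFmono : ∀ {p q : ℤ}, p ≤ q → F q ≤ F p := fun h => stmt9_mono hFdec h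
  have hGmono : ∀ {p q : ℤ}, p ≤ q → G q ≤ G p := fun h => stmt9_mono hGdec h
  -- trivial case n = 0
  rcases Nat.eq_zero_or_pos n with h0 | hpos
  · subst h0
    have hss : Subsingleton W := finrank_zero_iff.mp hrW
    have hss' : Subsingleton W' := finrank_zero_iff.mp hrW'
    have hsub' : Subsingleton (Submodule ℂ W') := Submodule.subsingleton_iff ℂ |>.mpr hss'
    refine ⟨LinearEquiv.ofFinrankEq W W' (by rw [hrW, hrW']), fun v w => ?_, fun p => Subsingleton.elim _ _⟩
    rw [Subsingleton.elim v 0, Subsingleton.elim w 0]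
    simp
  have hW : Nontrivial W := Module.finrank_pos_iff.mp (by rw [hrW]; exact hpos)
  have hW' : Nontrivial W' := Module.finrank_pos_iff.mp (by rw [hrW']; exact hpos)
  obtain ⟨a, ha⟩ := hFtop
  obtain ⟨b, hb⟩ := hFbot
  -- the largest p with F p ≠ ⊥
  obtain ⟨p₁, hp₁ne, hp₁max⟩ := Int.exists_greatest_of_bdd (P := fun p => F p ≠ ⊥)
    ⟨b, fun z hz => by
      by_contra hzb
      exact hz (hb z (by omega))⟩
    ⟨a, by
      show F a ≠ ⊥
      rw [ha a le_rfl]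
      intro h
      have h2 : finrank ℂ W = 0 := by rw [← finrank_top ℂ W, h, finrank_bot]
      omega⟩
  have hFbot' : ∀ p : ℤ, p₁ < p → F p = ⊥ := by
    intro p hp
    by_contra h
    exact absurd (hp₁max p h) (by omega)
  have hGbot' : ∀ p : ℤ, p₁ < p → G p = ⊥ := by
    intro p hp
    have := hdim p
    rw [hFbot' p hp] at this
    simp only [finrank_bot] at this
    exact Submodule.finrank_eq_zero.mp this.symm
  have hFtop' : ∀ p : ℤ, p ≤ k - p₁ → F p = ⊤ := by
    intro p hp
    have h1 := hdim' p
    rw [hFbot' (k - p + 1) (by omega)] at h1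
    simp only [finrank_bot, add_zero] at h1
    exact Submodule.eq_top_of_finrank_eq (by rw [h1, hrW])
  have hGtop' : ∀ p : ℤ, p ≤ k - p₁ → G p = ⊤ := by
    intro p hp
    have h1 := hdim p
    rw [hFtop' p hp] at h1
    apply Submodule.eq_top_of_finrank_eq
    rw [← h1, hrW', ← hrW]
    exact finrank_top ℂ W
  by_cases hcase : 2 * p₁ ≤ k
  · -- the filtration only takes the values ⊤ and ⊥
    obtain ⟨e, he⟩ := stmt9_classify n ε ψ ψ' hε hnd hnd' hsymm hsymm' hrW hrW'
    refine ⟨e, he, fun p => ?_⟩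
    by_cases hp : p ≤ p₁
    · rw [hFtop' p (by omega), hGtop' p (by omega)]
      rw [Submodule.map_top]
      exact LinearEquiv.range e
    · rw [hFbot' p (by omega), hGbot' p (by omega), Submodule.map_bot]
  · -- main inductive step
    have hmid : k - p₁ + 1 ≤ p₁ := by omega
    obtain ⟨v, hvF, hv0⟩ := Submodule.exists_mem_ne_zero_of_ne_bot hp₁ne
    have hGp₁ne : G p₁ ≠ ⊥ := by
      intro h
      apply hp₁ne
      apply Submodule.finrank_eq_zero.mp
      rw [hdim p₁, h, finrank_bot]
    obtain ⟨v', hvG, hv0'⟩ := Submodule.exists_mem_ne_zero_of_ne_bot hGp₁ne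
    have hvv : ψ v v = 0 := hFiso p₁ v hvF v (hFmono (by omega) hvF)
    have hvv' : ψ' v' v' = 0 := hGiso p₁ v' hvG v' (hGmono (by omega) hvG)
    -- hyperbolic partners
    have hex : ∃ w, ψ v w ≠ 0 := by
      by_contra h; push_neg at h; exact hv0 (hnd v h)
    obtain ⟨u₀, hu₀⟩ := hex
    have hex' : ∃ w, ψ' v' w ≠ 0 := by
      by_contra h; push_neg at h; exact hv0' (hnd' v' h)
    obtain ⟨u₀', hu₀'⟩ := hex'
    obtain ⟨u₁, hvu₁⟩ : ∃ u₁, ψ v u₁ = 1 :=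
      ⟨(ψ v u₀)⁻¹ • u₀, by rw [map_smul, smul_eq_mul, inv_mul_cancel₀ hu₀]⟩
    obtain ⟨u₁', hvu₁'⟩ : ∃ u₁', ψ' v' u₁' = 1 :=
      ⟨(ψ' v' u₀')⁻¹ • u₀', by rw [map_smul, smul_eq_mul, inv_mul_cancel₀ hu₀']⟩
    have hu₁v : ψ u₁ v = ε := by rw [hsymm, hvu₁, mul_one]
    have hu₁v' : ψ' u₁' v' = ε := by rw [hsymm', hvu₁', mul_one]
    have hiso_eps : ∀ x : W, ε = -1 → ψ x x = 0 := by
      intro x h1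
      have h := hsymm x x
      rw [h1, neg_one_mul] at h
      have h2 : (2:ℂ) * ψ x x = 0 := by linear_combination h
      exact (mul_eq_zero.mp h2).resolve_left two_ne_zero
    have hiso_eps' : ∀ x : W', ε = -1 → ψ' x x = 0 := by
      intro x h1
      have h := hsymm' x x
      rw [h1, neg_one_mul] at h
      have h2 : (2:ℂ) * ψ' x x = 0 := by linear_combination h
      exact (mul_eq_zero.mp h2).resolve_left two_ne_zero
    obtain ⟨u, hvu, huu⟩ : ∃ u, ψ v u = 1 ∧ ψ u u = 0 := by
      refine ⟨u₁ - (ψ u₁ u₁ / 2) • v, ?_, ?_⟩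
      · rw [map_sub, map_smul, hvu₁, hvv, smul_eq_mul]; ring
      · simp only [map_sub, map_smul, LinearMap.sub_apply, LinearMap.smul_apply, smul_eq_mul]
        rw [hu₁v, hvu₁, hvv]
        rcases mul_self_eq_one_iff.mp hε with h1 | h1
        · rw [h1]; ring
        · rw [h1, hiso_eps u₁ h1]; ring
    obtain ⟨u', hvu', huu'⟩ : ∃ u', ψ' v' u' = 1 ∧ ψ' u' u' = 0 := by
      refine ⟨u₁' - (ψ' u₁' u₁' / 2) • v', ?_, ?_⟩
      · rw [map_sub, map_smul, hvu₁', hvv', smul_eq_mul]; ring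
      · simp only [map_sub, map_smul, LinearMap.sub_apply, LinearMap.smul_apply, smul_eq_mul]
        rw [hu₁v', hvu₁', hvv']
        rcases mul_self_eq_one_iff.mp hε with h1 | h1
        · rw [h1]; ring
        · rw [h1, hiso_eps' u₁' h1]; ring
    -- split off the hyperbolic plane
    obtain ⟨hcompl, hPH, hHP, hdimH, hndH⟩ := split_plane ψ ε hε hsymm hnd v u hvv huu hvu
    obtain ⟨hcompl', hPH', hHP', hdimH', hndH'⟩ :=
      split_plane ψ' ε hε hsymm' hnd' v' u' hvv' huu' hvu'
    set H : Submodule ℂ W := LinearMap.ker (ψ v) ⊓ LinearMap.ker (ψ u) with hHdef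
    set H' : Submodule ℂ W' := LinearMap.ker (ψ' v') ⊓ LinearMap.ker (ψ' u') with hHdef'
    set ψH := ψ.compl₁₂ H.subtype H.subtype with hψH
    set ψH' := ψ'.compl₁₂ H'.subtype H'.subtype with hψH'
    set FH : ℤ → Submodule ℂ H := fun p => (F p).comap H.subtype with hFHdef
    set GH : ℤ → Submodule ℂ H' := fun p => (G p).comap H'.subtype with hGHdef
    have hm : finrank ℂ H + 2 = n := by rw [hdimH, hrW]
    have hm' : finrank ℂ H' = finrank ℂ H := by omega
    -- decomposition of middle terms
    have hFdecomp : ∀ p : ℤ, k - p₁ + 1 ≤ p → p ≤ p₁ →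
        (F p = span ℂ {v} ⊔ (F p ⊓ H) ∧ finrank ℂ (F p) = finrank ℂ ↥(F p ⊓ H) + 1) := by
      intro p hp1 hp2
      have hvFp : v ∈ F p := hFmono hp2 hvF
      have horth : ∀ x ∈ F p, ψ v x = 0 := by
        intro x hx
        exact hFiso p₁ v hvF x (hFmono (by omega) hx)
      exact ⟨stmt9_decomp ψ ε hε hsymm v u hvv hvu (F p) hvFp horth,
        stmt9_decomp_rank ψ ε hε hsymm v u hvv hvu (F p) hvFp horth⟩
    have hGdecomp : ∀ p : ℤ, k - p₁ + 1 ≤ p → p ≤ p₁ →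
        (G p = span ℂ {v'} ⊔ (G p ⊓ H') ∧ finrank ℂ (G p) = finrank ℂ ↥(G p ⊓ H') + 1) := by
      intro p hp1 hp2
      have hvGp : v' ∈ G p := hGmono hp2 hvG
      have horth : ∀ x ∈ G p, ψ' v' x = 0 := by
        intro x hx
        exact hGiso p₁ v' hvG x (hGmono (by omega) hx)
      exact ⟨stmt9_decomp ψ' ε hε hsymm' v' u' hvv' hvu' (G p) hvGp horth,
        stmt9_decomp_rank ψ' ε hε hsymm' v' u' hvv' hvu' (G p) hvGp horth⟩
    have hrkFH : ∀ p : ℤ, finrank ℂ (FH p) = finrank ℂ ↥(F p ⊓ H) := by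
      intro p
      rw [hFHdef]
      rw [← Submodule.finrank_map_subtype_eq H ((F p).comap H.subtype),
        Submodule.map_comap_subtype, inf_comm]
    have hrkGH : ∀ p : ℤ, finrank ℂ (GH p) = finrank ℂ ↥(G p ⊓ H') := by
      intro p
      rw [hGHdef]
      rw [← Submodule.finrank_map_subtype_eq H' ((G p).comap H'.subtype),
        Submodule.map_comap_subtype, inf_comm]
    -- ranks of the induced filtrations
    have hrkF3 : ∀ p : ℤ,
        (p ≤ k - p₁ → finrank ℂ (FH p) = finrank ℂ H) ∧
        (k - p₁ + 1 ≤ p → p ≤ p₁ → finrank ℂ (FH p) + 1 = finrank ℂ (F p)) ∧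
        (p₁ < p → finrank ℂ (FH p) = 0) := by
      intro p
      refine ⟨fun hp => ?_, fun hp1 hp2 => ?_, fun hp => ?_⟩
      · rw [hrkFH, hFtop' p hp, top_inf_eq]
      · rw [hrkFH, ← (hFdecomp p hp1 hp2).2]
      · rw [hrkFH, hFbot' p hp, bot_inf_eq, finrank_bot]
    have hrkG3 : ∀ p : ℤ,
        (p ≤ k - p₁ → finrank ℂ (GH p) = finrank ℂ H') ∧
        (k - p₁ + 1 ≤ p → p ≤ p₁ → finrank ℂ (GH p) + 1 = finrank ℂ (G p)) ∧
        (p₁ < p → finrank ℂ (GH p) = 0) := by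
      intro p
      refine ⟨fun hp => ?_, fun hp1 hp2 => ?_, fun hp => ?_⟩
      · rw [hrkGH, hGtop' p hp, top_inf_eq]
      · rw [hrkGH, ← (hGdecomp p hp1 hp2).2]
      · rw [hrkGH, hGbot' p hp, bot_inf_eq, finrank_bot]
    have hFHtop : ∀ p ≤ k - p₁, FH p = ⊤ := by
      intro p hp
      simp only [hFHdef]
      rw [hFtop' p hp, Submodule.comap_top]
    have hFHbot : ∀ p ≥ p₁ + 1, FH p = ⊥ := by
      intro p hp
      simp only [hFHdef]
      rw [hFbot' p (by omega), Submodule.comap_bot, Submodule.ker_subtype]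
    -- apply the induction hypothesis
    obtain ⟨e₂, he₂iso, he₂flag⟩ := IH (finrank ℂ H) (by omega) k ψH ψH' FH GH
      (by intro x hx; exact hndH x (fun y => by
            have := hx y; rwa [hψH, LinearMap.compl₁₂_apply] at this))
      (by intro x hx; exact hndH' x (fun y => by
            have := hx y; rwa [hψH', LinearMap.compl₁₂_apply] at this))
      (by intro x y; simp only [hψH, LinearMap.compl₁₂_apply]; exact hsymm _ _)
      (by intro x y; simp only [hψH', LinearMap.compl₁₂_apply]; exact hsymm' _ _)
      (fun p => Submodule.comap_mono (hFdec p))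
      (fun p => Submodule.comap_mono (hGdec p))
      ⟨k - p₁, hFHtop⟩
      ⟨p₁ + 1, hFHbot⟩
      (by -- hdim for induced filtrations
        intro p
        rcases lt_or_ge p₁ p with hp | hp
        · rw [(hrkF3 p).2.2 hp, (hrkG3 p).2.2 hp]
        rcases le_or_gt p (k - p₁) with hp' | hp'
        · rw [(hrkF3 p).1 hp', (hrkG3 p).1 hp', hm']
        · have h1 := (hrkF3 p).2.1 (by omega) hp
          have h2 := (hrkG3 p).2.1 (by omega) hp
          have h3 := hdim p
          omega)
      (by -- hdim' for induced filtrations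
        intro p
        rcases lt_or_ge p₁ p with hp | hp
        · rw [(hrkF3 p).2.2 hp, (hrkF3 (k - p + 1)).1 (by omega)]
          omega
        rcases le_or_gt p (k - p₁) with hp' | hp'
        · rw [(hrkF3 p).1 hp', (hrkF3 (k - p + 1)).2.2 (by omega)]
          omega
        · have h1 := (hrkF3 p).2.1 (by omega) hp
          have h2 := (hrkF3 (k - p + 1)).2.1 (by omega) (by omega)
          have h3 := hdim' p
          omega)
      (by intro p x hx y hy
          rw [hψH, LinearMap.compl₁₂_apply]
          exact hFiso p x hx y hy)
      (by intro p x hx y hy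
          rw [hψH', LinearMap.compl₁₂_apply]
          exact hGiso p x hx y hy)
      rfl hm'
    -- the isometry of the hyperbolic planes
    obtain ⟨e₁, he₁iso, he₁v, he₁u⟩ := plane_equiv ψ ψ' ε hsymm hsymm' v u v' u'
      (stmt9_pair_li ψ ε hε hsymm v u hvv hvu)
      (stmt9_pair_li ψ' ε hε hsymm' v' u' hvv' hvu')
      hvv huu hvu hvv' huu' hvu'
    -- glue
    obtain ⟨e, heiso, heP, heH⟩ := glue_aux ψ ψ' (span ℂ {v, u}) H hcompl
      (span ℂ {v', u'}) H' hcompl' hPH hHP hPH' hHP' e₁ he₁iso e₂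
      (fun x y => by have := he₂iso x y; rwa [hψH, hψH', LinearMap.compl₁₂_apply,
        LinearMap.compl₁₂_apply] at this)
    refine ⟨e, heiso, fun p => ?_⟩
    rcases le_or_gt p (k - p₁) with hp | hp
    · rw [hFtop' p hp, hGtop' p (by omega), Submodule.map_top]
      exact LinearEquiv.range e
    rcases lt_or_ge p₁ p with hp' | hp'
    · rw [hFbot' p hp', hGbot' p hp', Submodule.map_bot]
    · -- middle range
      have hvmem : v ∈ span ℂ {v, u} := Submodule.subset_span (by simp)
      have hev : e v = v' := by
        have h1 := heP ⟨v, hvmem⟩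
        rw [h1, he₁v ⟨v, hvmem⟩ rfl]
      have hcomp : (e : W →ₗ[ℂ] W').comp H.subtype = H'.subtype.comp e₂.toLinearMap := by
        apply LinearMap.ext
        intro x
        simp only [LinearMap.comp_apply, Submodule.subtype_apply, LinearEquiv.coe_coe]
        exact heH x
      have hmapinf : Submodule.map (e : W →ₗ[ℂ] W') (F p ⊓ H) = G p ⊓ H' := by
        rw [inf_comm, ← Submodule.map_comap_subtype, ← Submodule.map_comp, hcomp,
          Submodule.map_comp]
        have : Submodule.map (e₂ : H →ₗ[ℂ] H') (FH p) = GH p := he₂flag p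
        rw [hFHdef] at this
        simp only at this
        rw [this, hGHdef]
        simp only
        rw [Submodule.map_comap_subtype, inf_comm]
      rw [(hFdecomp p (by omega) hp').1, (hGdecomp p (by omega) hp').1,
        Submodule.map_sup, hmapinf]
      congr 1
      rw [Submodule.map_span, Set.image_singleton]
      congr 1
      simp only [LinearEquiv.coe_coe]
      rw [hev]

/-- Let `W` be a finite-dimensional complex vector space, `k` an
integer, and `ψ` a nondegenerate bilinear form on `W` with `ψ(w,v) = (-1)^k ψ(v,w)`.
Let `(F^p)` and `(G^p)` be two decreasing filtrations of `W` by complex subspaces, each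
eventually equal to `W` and to `0`, with `dim F^p = dim G^p` and
`dim F^p + dim F^{k-p+1} = dim W` for every `p`, and both isotropic in the sense that
`ψ(F^p, F^{k-p+1}) = 0` and `ψ(G^p, G^{k-p+1}) = 0` for every `p`.  Then some isometry
of `ψ` carries `(F^p)` onto `(G^p)`: the isometry group of `ψ` acts transitively on the
compact dual `Ď` of the period domain. -/
theorem stmt9 {W : Type*} [AddCommGroup W] [Module ℂ W] [FiniteDimensional ℂ W]
    (k : ℤ) (ψ : W →ₗ[ℂ] W →ₗ[ℂ] ℂ)
    (hnd : ∀ v : W, (∀ w : W, ψ v w = 0) → v = 0)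
    (hsymm : ∀ v w : W, ψ w v = (-1 : ℂ) ^ k * ψ v w)
    (F G : ℤ → Submodule ℂ W)
    (hFdec : ∀ p : ℤ, F (p + 1) ≤ F p) (hGdec : ∀ p : ℤ, G (p + 1) ≤ G p)
    (hFtop : ∃ a : ℤ, ∀ p ≤ a, F p = ⊤) (hGtop : ∃ a : ℤ, ∀ p ≤ a, G p = ⊤)
    (hFbot : ∃ b : ℤ, ∀ p ≥ b, F p = ⊥) (hGbot : ∃ b : ℤ, ∀ p ≥ b, G p = ⊥)
    (hdim : ∀ p : ℤ, Module.finrank ℂ (F p) = Module.finrank ℂ (G p))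
    (hdim' : ∀ p : ℤ,
      Module.finrank ℂ (F p) + Module.finrank ℂ (F (k - p + 1)) = Module.finrank ℂ W)
    (hFiso : ∀ p : ℤ, ∀ v ∈ F p, ∀ w ∈ F (k - p + 1), ψ v w = 0)
    (hGiso : ∀ p : ℤ, ∀ v ∈ G p, ∀ w ∈ G (k - p + 1), ψ v w = 0) :
    ∃ g : W ≃ₗ[ℂ] W,
      (∀ v w : W, ψ (g v) (g w) = ψ v w) ∧
      ∀ p : ℤ, (F p).map (g : W →ₗ[ℂ] W) = G p := by
  exact stmt9_key (finrank ℂ W) k ψ ψ F G hnd hnd hsymm hsymm hFdec hGdec hFtop hFbot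
    hdim hdim' hFiso hGiso rfl rfl
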